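/- Let λ ∈ ℂ with λ ∉ a(𝕋), and let v ∈ ℓ² satisfy T(a)v = λv. Then v decays exponentially: there exist a constant C > 0 and a real number r with 0 < r < 1 such that |v_i| ≤ C r^i for all i ≥ 1. -/

import Mathlib

open scoped ENNReal

noncomputable section

open Polynomial Filter

namespace Stmt5Aux

/-- The left-shift operator on sequences. -/
def S : Module.End ℂ (ℕ → ℂ) := LinearMap.funLeft ℂ ℂ (fun i => i + 1)

lemma S_apply (w : ℕ → ℂ) (i : ℕ) : S w i = w (i + 1) := rfl

lemma S_pow_apply (k : ℕ) (w : ℕ → ℂ) (i : ℕ) : (S ^ k) w i = w (i + k) := by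
  induction k generalizing w i with
  | zero => simp
  | succ k ih =>
    rw [pow_succ, Module.End.mul_apply, ih]
    rfl

lemma sub_alg_apply (z : ℂ) (w : ℕ → ℂ) (i : ℕ) :
    ((S - algebraMap ℂ (Module.End ℂ (ℕ → ℂ)) z) w) i = w (i + 1) - z * w i := by
  simp [LinearMap.sub_apply, S_apply, Module.algebraMap_end_apply]

/-- Main induction: if a sequence tending to zero is annihilated by a product of
shift factors `S - z` with all `|z| ≠ 1`, then it decays exponentially. -/
lemma decay_of_listprod (l : List ℂ) :
    ∀ w : ℕ → ℂ, (∀ z ∈ l, ‖z‖ ≠ 1) →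
    Tendsto w atTop (nhds 0) →
    (Polynomial.aeval S ((l.map fun z => Polynomial.X - Polynomial.C z).prod)) w = 0 →
    ∃ C : ℝ, 0 < C ∧ ∃ r : ℝ, 0 < r ∧ r < 1 ∧ ∀ i, ‖w i‖ ≤ C * r ^ i := by
  induction l with
  | nil =>
    intro w _ _ h0
    simp only [List.map_nil, List.prod_nil, map_one, Module.End.one_apply] at h0
    refine ⟨1, one_pos, 1/2, by norm_num, by norm_num, fun i => ?_⟩
    simp [h0]
  | cons z l ih =>
    intro w hz hw h0
    have hzne : ‖z‖ ≠ 1 := hz z List.mem_cons_self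
    set u : ℕ → ℂ := fun i => w (i + 1) - z * w i with hu_def
    have hu_eq : (Polynomial.aeval S (X - C z)) w = u := by
      funext i
      rw [map_sub, aeval_X, aeval_C, sub_alg_apply]
    have hu0 : (Polynomial.aeval S ((l.map fun z => X - C z).prod)) u = 0 := by
      simp only [List.map_cons, List.prod_cons] at h0
      rw [mul_comm, map_mul, Module.End.mul_apply, hu_eq] at h0
      exact h0
    have hu_tend : Tendsto u atTop (nhds 0) := by
      have h1 : Tendsto (fun i => w (i + 1)) atTop (nhds 0) :=
        hw.comp (Filter.tendsto_add_atTop_nat 1)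
      have h2 : Tendsto (fun i => z * w i) atTop (nhds 0) := by
        simpa using hw.const_mul z
      simpa using h1.sub h2
    obtain ⟨Cu, hCu, r, hr0, hr1, hbd⟩ :=
      ih u (fun z' h => hz z' (List.mem_cons_of_mem _ h)) hu_tend hu0
    have hw_rec : ∀ i, w (i + 1) = z * w i + u i := by
      intro i; simp [hu_def]
    rcases hzne.lt_or_gt with hlt | hgt
    · -- |z| < 1
      set t := max (‖z‖) r with ht
      have ht1 : t < 1 := max_lt hlt hr1
      set s := (t + 1) / 2 with hs
      have hts : t < s := by rw [hs]; linarith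
      have hs1 : s < 1 := by rw [hs]; linarith
      have hrs : r ≤ t := le_max_right _ _
      have hzs : ‖z‖ < s := lt_of_le_of_lt (le_max_left _ _) hts
      have hs0 : 0 < s := lt_of_lt_of_le hr0 (hrs.trans hts.le)
      set C' := max (‖w 0‖ + 1) (Cu / (s - ‖z‖)) with hC'
      have hC'0 : 0 < C' := lt_of_lt_of_le (by positivity) (le_max_left _ _)
      have hkey : Cu ≤ C' * (s - ‖z‖) := by
        have h1 : Cu / (s - ‖z‖) ≤ C' := le_max_right _ _
        have h2 : 0 < s - ‖z‖ := by linarith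
        calc Cu = Cu / (s - ‖z‖) * (s - ‖z‖) := by field_simp
        _ ≤ C' * (s - ‖z‖) := mul_le_mul_of_nonneg_right h1 h2.le
      refine ⟨C', hC'0, s, hs0, hs1, ?_⟩
      intro i
      induction i with
      | zero =>
        simp only [pow_zero, mul_one]
        exact le_trans (by linarith) (le_max_left _ _)
      | succ i ihh =>
        have h1 : ‖w (i + 1)‖ ≤ ‖z‖ * ‖w i‖
            + ‖u i‖ := by
          rw [hw_rec i]
          exact (norm_add_le _ _).trans (by rw [norm_mul])
        have h2 : ‖u i‖ ≤ Cu * r ^ i := hbd i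
        have hri : r ^ i ≤ s ^ i := pow_le_pow_left₀ hr0.le (hrs.trans hts.le) i
        have hsi : (0:ℝ) < s ^ i := pow_pos hs0 i
        have habs0 : (0:ℝ) ≤ ‖z‖ := norm_nonneg z
        calc ‖w (i + 1)‖
            ≤ ‖z‖ * ‖w i‖ + Cu * r ^ i := by linarith
          _ ≤ ‖z‖ * (C' * s ^ i) + C' * (s - ‖z‖) * s ^ i := by
              have h4 := mul_le_mul_of_nonneg_left ihh habs0
              have h3 : Cu * r ^ i ≤ C' * (s - ‖z‖) * s ^ i := by
                calc Cu * r ^ i ≤ Cu * s ^ i := mul_le_mul_of_nonneg_left hri hCu.le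
                  _ ≤ C' * (s - ‖z‖) * s ^ i :=
                      mul_le_mul_of_nonneg_right hkey hsi.le
              linarith
          _ = C' * s ^ (i + 1) := by ring
    · -- |z| > 1
      have habs1 : (1:ℝ) < ‖z‖ := hgt
      have hz0 : z ≠ 0 := by
        intro h; rw [h] at habs1; simp at habs1; linarith
      have key : ∀ i N, w i = w (i + N) / z ^ N
          - ∑ j ∈ Finset.range N, u (i + j) / z ^ (j + 1) := by
        intro i N
        induction N with
        | zero => simp
        | succ N ihN =>
          have hstep : w (i + (N + 1)) = z * w (i + N) + u (i + N) := by
            rw [show i + (N + 1) = (i + N) + 1 from rfl, hw_rec (i + N)]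
          rw [Finset.sum_range_succ, hstep, ihN]
          have hzN : (z : ℂ) ^ N ≠ 0 := pow_ne_zero _ hz0
          field_simp
          ring
      have hgeom : ∀ N : ℕ, ∑ j ∈ Finset.range N, (‖z‖)⁻¹ ^ (j + 1)
          ≤ (‖z‖ - 1)⁻¹ := by
        intro N
        have hq0 : (0:ℝ) ≤ (‖z‖)⁻¹ := by positivity
        have hq1' : (‖z‖)⁻¹ < 1 := by
          rw [inv_lt_one_iff₀]; right; exact habs1
        have hsummable : Summable (fun j : ℕ => (‖z‖)⁻¹ ^ (j + 1)) :=
          (summable_geometric_of_lt_one hq0 hq1').comp_injective (add_left_injective 1)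
        calc ∑ j ∈ Finset.range N, (‖z‖)⁻¹ ^ (j + 1)
            ≤ ∑' j : ℕ, (‖z‖)⁻¹ ^ (j + 1) :=
              Summable.sum_le_tsum _ (fun j _ => by positivity) hsummable
          _ = (‖z‖)⁻¹ * ∑' j : ℕ, (‖z‖)⁻¹ ^ j := by
              rw [← tsum_mul_left]
              congr 1; funext j; ring
          _ = (‖z‖)⁻¹ * (1 - (‖z‖)⁻¹)⁻¹ := by
              rw [tsum_geometric_of_lt_one hq0 hq1']
          _ = (‖z‖ - 1)⁻¹ := by
              rw [← mul_inv]
              congr 1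
              field_simp
      have hbound : ∀ i N, ‖w i‖
          ≤ ‖w (i + N)‖ + Cu * r ^ i * (‖z‖ - 1)⁻¹ := by
        intro i N
        rw [key i N]
        have h1 : ‖w (i + N) / z ^ N‖ ≤ ‖w (i + N)‖ := by
          rw [norm_div, norm_pow]
          exact div_le_self (norm_nonneg _) (one_le_pow₀ habs1.le)
        have h2 : ‖∑ j ∈ Finset.range N, u (i + j) / z ^ (j + 1)‖
            ≤ Cu * r ^ i * (‖z‖ - 1)⁻¹ := by
          calc ‖∑ j ∈ Finset.range N, u (i + j) / z ^ (j + 1)‖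
              ≤ ∑ j ∈ Finset.range N, ‖u (i + j) / z ^ (j + 1)‖ :=
                norm_sum_le _ _
            _ ≤ ∑ j ∈ Finset.range N, Cu * r ^ i * (‖z‖)⁻¹ ^ (j + 1) := by
                refine Finset.sum_le_sum fun j _ => ?_
                rw [norm_div, norm_pow, div_eq_mul_inv, ← inv_pow]
                refine mul_le_mul ?_ le_rfl (by positivity) (by positivity)
                calc ‖u (i + j)‖ ≤ Cu * r ^ (i + j) := hbd _
                  _ = Cu * r ^ i * r ^ j := by rw [pow_add]; ring
                  _ ≤ Cu * r ^ i * 1 := by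
                      refine mul_le_mul_of_nonneg_left ?_ (by positivity)
                      exact pow_le_one₀ hr0.le hr1.le
                  _ = Cu * r ^ i := mul_one _
            _ = Cu * r ^ i * ∑ j ∈ Finset.range N, (‖z‖)⁻¹ ^ (j + 1) := by
                rw [← Finset.mul_sum]
            _ ≤ Cu * r ^ i * (‖z‖ - 1)⁻¹ := by
                refine mul_le_mul_of_nonneg_left (hgeom N) (by positivity)
        calc ‖w (i + N) / z ^ N
              - ∑ j ∈ Finset.range N, u (i + j) / z ^ (j + 1)‖
            ≤ ‖w (i + N) / z ^ N‖
              + ‖∑ j ∈ Finset.range N, u (i + j) / z ^ (j + 1)‖ :=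
              by simpa using norm_sub_le (w (i + N) / z ^ N) _
          _ ≤ ‖w (i + N)‖ + Cu * r ^ i * (‖z‖ - 1)⁻¹ := by
              linarith
      have hK : (0:ℝ) < (‖z‖ - 1)⁻¹ := inv_pos.mpr (by linarith)
      refine ⟨Cu * (‖z‖ - 1)⁻¹, mul_pos hCu hK, r, hr0, hr1, fun i => ?_⟩
      have h5 : Tendsto (fun N => w (i + N)) atTop (nhds 0) := by
        have h := hw.comp (Filter.tendsto_add_atTop_nat i)
        simpa [Function.comp_def, Nat.add_comm] using h
      have h6 : Tendsto (fun N => ‖w (i + N)‖) atTop (nhds 0) := by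
        simpa using h5.norm
      have h7 : Tendsto
          (fun N => ‖w (i + N)‖ + Cu * r ^ i * (‖z‖ - 1)⁻¹)
          atTop (nhds (0 + Cu * r ^ i * (‖z‖ - 1)⁻¹)) :=
        h6.add tendsto_const_nhds
      have h8 := ge_of_tendsto' h7 (fun N => hbound i N)
      calc ‖w i‖ ≤ 0 + Cu * r ^ i * (‖z‖ - 1)⁻¹ := h8
        _ = Cu * (‖z‖ - 1)⁻¹ * r ^ i := by ring

end Stmt5Aux

/-- The polynomial `b_λ(z) = z^m (a(z) - λ) = ∑_{k=0}^{m+n} a_{k-m} z^k - λ z^m`. -/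
def bpoly (m n : ℕ) (a : ℤ → ℂ) (lam : ℂ) : Polynomial ℂ :=
  (∑ k ∈ Finset.range (m + n + 1), Polynomial.C (a ((k : ℤ) - (m : ℤ))) * Polynomial.X ^ k)
    - Polynomial.C lam * Polynomial.X ^ m

/-- `p(λ)`: the number of roots of `b_λ` in the open unit disk, counted with multiplicity. -/
def rootCount (m n : ℕ) (a : ℤ → ℂ) (lam : ℂ) : ℕ :=
  Multiset.card ((bpoly m n a lam).roots.filter fun z => ‖z‖ < 1)

/-- The value `a(z) = ∑_{k=-m}^{n} a_k z^k` of the Laurent polynomial. -/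
def aval (m n : ℕ) (a : ℤ → ℂ) (z : ℂ) : ℂ :=
  ∑ k ∈ Finset.Icc (-(m : ℤ)) (n : ℤ), a k * z ^ k

/-- The image `a(𝕋)` of the unit circle under the Laurent polynomial `a`. -/
def aCircle (m n : ℕ) (a : ℤ → ℂ) : Set ℂ :=
  {w : ℂ | ∃ z : ℂ, ‖z‖ = 1 ∧ aval m n a z = w}

/-- The Hilbert space `ℓ²` of square-summable complex sequences (0-indexed). -/
abbrev ell2 := lp (fun _ : ℕ => ℂ) 2


open Polynomial Filter in
lemma Stmt5Aux.bpoly_coeff (m n : ℕ) (hn : 1 ≤ n) (a : ℤ → ℂ) (lam : ℂ) :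
    (bpoly m n a lam).coeff (m + n) = a (n : ℤ) := by
  simp only [bpoly, Polynomial.coeff_sub, Polynomial.finset_sum_coeff,
    Polynomial.coeff_C_mul, Polynomial.coeff_X_pow, mul_ite, mul_one, mul_zero]
  rw [Finset.sum_ite_eq (Finset.range (m + n + 1)) (m + n)]
  simp only [Finset.mem_range, lt_add_iff_pos_right, zero_lt_one, if_true]
  have h1 : ¬ (m + n = m) := by omega
  have h2 : ((m:ℤ) + n) - m = (n:ℤ) := by ring
  simp [h1, show n ≠ 0 by omega]

open Polynomial Filter in
lemma Stmt5Aux.bpoly_natDegree (m n : ℕ) (hn : 1 ≤ n) (a : ℤ → ℂ) (lam : ℂ)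
    (han : a (n:ℤ) ≠ 0) : (bpoly m n a lam).natDegree = m + n := by
  have hco := Stmt5Aux.bpoly_coeff m n hn a lam
  have hdegle : (bpoly m n a lam).degree ≤ ((m + n : ℕ) : WithBot ℕ) := by
    refine le_trans (Polynomial.degree_sub_le _ _) (max_le ?_ ?_)
    · refine le_trans (Polynomial.degree_sum_le _ _) (Finset.sup_le fun k hk => ?_)
      refine le_trans (Polynomial.degree_C_mul_X_pow_le k _) ?_
      exact_mod_cast Nat.cast_le.mpr (Nat.lt_succ_iff.mp (Finset.mem_range.mp hk))
    · exact le_trans (Polynomial.degree_C_mul_X_pow_le m _) (Nat.cast_le.mpr (by omega))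
  exact le_antisymm (Polynomial.natDegree_le_iff_degree_le.mpr hdegle)
    (Polynomial.le_natDegree_of_ne_zero (by rw [hco]; exact han))

open Polynomial Filter in
lemma Stmt5Aux.bpoly_eval (m n : ℕ) (a : ℤ → ℂ) (lam : ℂ) (z : ℂ) (hz0 : z ≠ 0) :
    (bpoly m n a lam).eval z = z ^ m * (aval m n a z - lam) := by
  have hsum : z ^ m * aval m n a z
      = ∑ k ∈ Finset.range (m + n + 1), a ((k : ℤ) - (m : ℤ)) * z ^ k := by
    rw [aval, Finset.mul_sum]
    refine Finset.sum_nbij' (fun k : ℤ => (k + m).toNat) (fun t : ℕ => (t : ℤ) - m)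
      ?_ ?_ ?_ ?_ ?_
    · intro k hk
      simp only [Finset.mem_Icc] at hk
      simp only [Finset.mem_range]
      omega
    · intro t ht
      simp only [Finset.mem_range] at ht
      simp only [Finset.mem_Icc]
      omega
    · intro k hk
      simp only [Finset.mem_Icc] at hk
      show (((k + (m:ℤ)).toNat : ℤ)) - m = k
      omega
    · intro t ht
      simp only [Finset.mem_range] at ht
      show (((t : ℤ) - m + m).toNat) = t
      omega
    · intro k hk
      simp only [Finset.mem_Icc] at hk
      have hcast : ((( k + m).toNat : ℤ)) = k + m := Int.toNat_of_nonneg (by omega)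
      rw [hcast]
      have h2 : z ^ (((k + m).toNat : ℕ)) = z ^ ((k + m) : ℤ) := by
        rw [← zpow_natCast, hcast]
      rw [h2]
      have h3 : (z : ℂ) ^ ((k + m) : ℤ) = z ^ (m : ℤ) * z ^ k := by
        rw [← zpow_add₀ hz0]; congr 1; ring
      rw [h3, ← zpow_natCast z m]
      ring_nf
  rw [bpoly, Polynomial.eval_sub, Polynomial.eval_finset_sum]
  simp only [Polynomial.eval_mul, Polynomial.eval_C, Polynomial.eval_pow, Polynomial.eval_X]
  rw [← hsum]
  ring

/-- if `λ ∉ a(𝕋)` and `v ∈ ℓ²` satisfies `T(a) v = λ v`, then `v` decays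
exponentially: `|v_i| ≤ C r^i` (1-based indexing; here entry `i : ℕ` is `v_{i+1}`). -/
theorem stmt_5 (m n : ℕ) (hm : 1 ≤ m) (hn : 1 ≤ n) (a : ℤ → ℂ)
    (ham : a (-(m : ℤ)) ≠ 0) (han : a (n : ℤ) ≠ 0)
    (hsupp : ∀ k : ℤ, (k < -(m : ℤ) ∨ (n : ℤ) < k) → a k = 0)
    (T : ell2 →L[ℂ] ell2)
    (hT : ∀ (v : ell2) (i : ℕ),
      (T v) i = ∑ j ∈ Finset.range (i + n + 1), a ((j : ℤ) - (i : ℤ)) * v j)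
    (lam : ℂ) (hlam : lam ∉ aCircle m n a)
    (v : ell2) (hv : T v = lam • v) :
    ∃ C : ℝ, 0 < C ∧ ∃ r : ℝ, 0 < r ∧ r < 1 ∧
      ∀ i : ℕ, ‖v i‖ ≤ C * r ^ (i + 1) := by
  classical
  open Polynomial Filter Stmt5Aux in
  -- eigenvalue equation, pointwise
  have heig : ∀ i : ℕ, ∑ j ∈ Finset.range (i + n + 1), a ((j:ℤ) - (i:ℤ)) * v j
      = lam * v i := by
    intro i
    rw [← hT v i, hv, lp.coeFn_smul, Pi.smul_apply, smul_eq_mul]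
  -- the recurrence
  have hrec : ∀ i : ℕ, ∑ k ∈ Finset.range (m + n + 1), a ((k:ℤ) - (m:ℤ)) * v (i + k)
      = lam * v (i + m) := by
    intro i
    calc ∑ k ∈ Finset.range (m + n + 1), a ((k:ℤ) - (m:ℤ)) * v (i + k)
        = ∑ j ∈ Finset.Ico i (i + (m + n + 1)), a ((j:ℤ) - (i:ℤ) - (m:ℤ)) * v j := by
          rw [Finset.sum_Ico_eq_sum_range]
          simp only [add_tsub_cancel_left]
          refine Finset.sum_congr rfl fun k hk => ?_
          congr 2
          push_cast
          ring
      _ = ∑ j ∈ Finset.range (i + m + n + 1), a ((j:ℤ) - (i:ℤ) - (m:ℤ)) * v j := by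
          rw [show i + (m + n + 1) = i + m + n + 1 by omega, Finset.range_eq_Ico,
            ← Finset.sum_Ico_consecutive _ (Nat.zero_le i)
              (show i ≤ i + m + n + 1 by omega)]
          have hzero : ∑ j ∈ Finset.Ico 0 i, a ((j:ℤ) - (i:ℤ) - (m:ℤ)) * v j = 0 := by
            refine Finset.sum_eq_zero fun j hj => ?_
            have hji := (Finset.mem_Ico.mp hj).2
            rw [hsupp _ (Or.inl (by push_cast; omega)), zero_mul]
          rw [hzero, zero_add]
      _ = lam * v (i + m) := by
          rw [← heig (i + m)]
          refine Finset.sum_congr rfl fun j hj => ?_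
          congr 2
          push_cast
          ring
  -- the shift-polynomial annihilates v
  have haev : (Polynomial.aeval Stmt5Aux.S (bpoly m n a lam)) (fun i => v i) = 0 := by
    funext i
    simp only [bpoly, map_sub, map_sum, map_mul, Polynomial.aeval_C, map_pow,
      Polynomial.aeval_X, LinearMap.sub_apply, LinearMap.coe_sum, Finset.sum_apply,
      Module.End.mul_apply, Module.algebraMap_end_apply, Pi.sub_apply, Pi.smul_apply,
      smul_eq_mul, Stmt5Aux.S_pow_apply, Pi.zero_apply]
    rw [hrec i]
    ring
  -- facts about bpoly
  set b := bpoly m n a lam with hb_def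
  have hco : b.coeff (m + n) = a (n : ℤ) := Stmt5Aux.bpoly_coeff m n hn a lam
  have hbne : b ≠ 0 := by
    intro h
    apply han
    rw [← hco, h, Polynomial.coeff_zero]
  have hdeg : b.natDegree = m + n := Stmt5Aux.bpoly_natDegree m n hn a lam han
  have hlead : b.leadingCoeff = a (n : ℤ) := by
    rw [Polynomial.leadingCoeff, hdeg, hco]
  have hcard : Multiset.card b.roots = b.natDegree :=
    Polynomial.splits_iff_card_roots.mp (IsAlgClosed.splits b)
  have hfact : Polynomial.C (a (n : ℤ))
      * (Multiset.map (fun z => Polynomial.X - Polynomial.C z) b.roots).prod = b := by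
    rw [← hlead]
    exact Polynomial.C_leadingCoeff_mul_prod_multiset_X_sub_C hcard
  -- roots are off the unit circle
  have hroot_ne : ∀ z ∈ b.roots, ‖z‖ ≠ 1 := by
    intro z hzr hz1
    have hz0 : z ≠ 0 := by
      intro h
      rw [h] at hz1
      simp at hz1
    have heval : b.eval z = 0 := (Polynomial.mem_roots hbne).mp hzr
    rw [Stmt5Aux.bpoly_eval m n a lam z hz0] at heval
    have hzm : (z : ℂ) ^ m ≠ 0 := pow_ne_zero _ hz0
    have : aval m n a z = lam := by
      rcases mul_eq_zero.mp heval with h | h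
      · exact absurd h hzm
      · exact sub_eq_zero.mp h
    exact hlam ⟨z, hz1, this⟩
  -- pass to a list of roots
  set l := b.roots.toList with hl_def
  have hlprod : (Multiset.map (fun z => Polynomial.X - Polynomial.C z) b.roots).prod
      = ((l.map fun z => Polynomial.X - Polynomial.C z).prod) := by
    conv_lhs => rw [← Multiset.coe_toList b.roots]
    rw [Multiset.map_coe, Multiset.prod_coe]
  have hlne : ∀ z ∈ l, ‖z‖ ≠ 1 := fun z hzl =>
    hroot_ne z ((Multiset.mem_toList).mp hzl)
  have h0 : (Polynomial.aeval Stmt5Aux.S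
      ((l.map fun z => Polynomial.X - Polynomial.C z).prod)) (fun i => v i) = 0 := by
    have h1 : (Polynomial.aeval Stmt5Aux.S b) (fun i => (v i : ℂ))
        = a (n : ℤ) • ((Polynomial.aeval Stmt5Aux.S
          ((l.map fun z => Polynomial.X - Polynomial.C z).prod)) (fun i => v i)) := by
      conv_lhs => rw [← hfact]
      rw [hlprod, map_mul, Polynomial.aeval_C, Module.End.mul_apply,
        Module.algebraMap_end_apply]
    rw [haev] at h1
    exact (smul_eq_zero.mp h1.symm).resolve_left han
  -- v tends to zero
  have hv0 : Filter.Tendsto (fun i => (v i : ℂ)) Filter.atTop (nhds 0) := by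
    have h1 : Summable (fun i => ‖v i‖ ^ ((2:ℝ≥0∞)).toReal) :=
      Memℓp.summable (by norm_num) (lp.memℓp v)
    have h2 := h1.tendsto_atTop_zero
    have h4 : ∀ i : ℕ, Real.sqrt (‖v i‖ ^ ((2:ℝ≥0∞)).toReal) = ‖v i‖ := by
      intro i
      have ht : ((2:ℝ≥0∞)).toReal = (2:ℝ) := by norm_num
      rw [ht, show (2:ℝ) = ((2:ℕ):ℝ) by norm_num, Real.rpow_natCast,
        Real.sqrt_sq (norm_nonneg _)]
    have h6 : (fun i : ℕ => Real.sqrt (‖v i‖ ^ ((2:ℝ≥0∞)).toReal))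
        = fun i : ℕ => ‖v i‖ := funext h4
    have h5 := (Real.continuous_sqrt.tendsto 0).comp h2
    rw [Real.sqrt_zero] at h5
    have h3 : Filter.Tendsto (fun i => ‖v i‖) Filter.atTop (nhds 0) := by
      rw [← h6]; exact h5
    exact tendsto_zero_iff_norm_tendsto_zero.mpr h3
  -- apply the decay lemma
  obtain ⟨C, hC, r, hr0, hr1, hbd⟩ :=
    Stmt5Aux.decay_of_listprod l (fun i => v i) hlne hv0 h0
  refine ⟨C / r, by positivity, r, hr0, hr1, fun i => ?_⟩
  have := hbd i
  calc ‖v i‖ ≤ C * r ^ i := hbd i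
    _ = C / r * r ^ (i + 1) := by
        rw [pow_succ]
        field_simp
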